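/- If Δ is a flag homology (d−1)-sphere with d ≥ 1, then Δ has at least 2d vertices, i.e., f₀(Δ) ≥ 2d; equivalently γ₁(Δ) = f₀(Δ) − 2d ≥ 0. -/
import Mathlib


open Finset

attribute [local instance] Classical.propDecidable

variable {V : Type*}

def IsComplex (K : Set (Finset V)) : Prop :=
  ∅ ∈ K ∧ ∀ s ∈ K, ∀ t ⊆ s, t ∈ K

def IsFlag (K : Set (Finset V)) : Prop :=
  ∀ s : Finset V, s ∉ K → (∀ t ⊂ s, t ∈ K) → s.card = 2

def link [DecidableEq V] (σ : Finset V) (K : Set (Finset V)) : Set (Finset V) :=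
  {τ | τ ∩ σ = ∅ ∧ τ ∪ σ ∈ K}

noncomputable def fnum (K : Set (Finset V)) (i : ℕ) : ℕ := {s ∈ K | s.card = i}.ncard

variable [LinearOrder V]

/-- The group of simplicial `ℤ`-chains spanned by the faces with exactly `n` vertices
(so chain degree `n` corresponds to topological dimension `n-1`; degree `0` is spanned
by the empty face, giving the augmented/reduced chain complex). -/
abbrev Chains (K : Set (Finset V)) (n : ℕ) : Type _ :=
  {s : Finset V // s ∈ K ∧ s.card = n} →₀ ℤ

/-- The simplicial boundary map, with signs given by the position of a vertex in the
sorted list of vertices of a face. -/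
noncomputable def bd (K : Set (Finset V)) (n : ℕ) :
    Chains K (n + 1) →ₗ[ℤ] Chains K n :=
  Finsupp.lsum ℤ fun s => LinearMap.toSpanSingleton ℤ (Chains K n)
    (∑ v ∈ s.1.attach,
      ((-1 : ℤ) ^ ({w ∈ s.1 | w < v.1} : Finset V).card) •
        if h : s.1.erase v.1 ∈ K then
          Finsupp.single ⟨s.1.erase v.1, h, by
            have hc := s.2.2
            rw [Finset.card_erase_of_mem v.2, hc]; omega⟩ (1 : ℤ)
        else 0)

/-- Reduced cycles: everything in degree `0`, kernels of the boundary above. -/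
noncomputable def cycles (K : Set (Finset V)) : (n : ℕ) → Submodule ℤ (Chains K n)
  | 0 => ⊤
  | n + 1 => LinearMap.ker (bd K n)

/-- Reduced simplicial homology in chain degree `n` (topological degree `n-1`):
cycles modulo boundaries. -/
abbrev RH (K : Set (Finset V)) (n : ℕ) :=
  cycles K n ⧸ Submodule.comap (cycles K n).subtype (LinearMap.range (bd K n))

/-- `K` has the reduced homology of a sphere of topological dimension `n-1`:
`ℤ` in chain degree `n` and zero elsewhere. -/
def HasSphereHomology (K : Set (Finset V)) (n : ℕ) : Prop :=
  Nonempty (RH K n ≃ₗ[ℤ] ℤ) ∧ ∀ m : ℕ, m ≠ n → Subsingleton (RH K m)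

/-- A homology `(d-1)`-sphere: a complex of dimension `≤ d-1` in which the link of every
face `σ` (including the empty face) has the reduced homology of a sphere of dimension
`d - 1 - |σ|`. -/
def IsHomologySphere (K : Set (Finset V)) (d : ℕ) : Prop :=
  IsComplex K ∧ (∀ s ∈ K, s.card ≤ d) ∧
    ∀ σ ∈ K, HasSphereHomology (link σ K) (d - σ.card)

section Aux

omit [LinearOrder V] in
/-- In a flag complex, a set all of whose 2-element subsets are faces is a face. -/
lemma flag_clique {K : Set (Finset V)} (hF : IsFlag K) :
    ∀ s : Finset V, (∀ t ⊆ s, t.card = 2 → t ∈ K) → s ∈ K := by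
  intro s
  induction s using Finset.strongInduction with
  | _ s ih =>
    intro hpairs
    by_contra hs
    by_cases hall : ∀ t ⊂ s, t ∈ K
    · exact hs (hpairs s Finset.Subset.rfl (hF s hs hall))
    · push_neg at hall
      obtain ⟨t, hts, ht⟩ := hall
      exact ht (ih t hts (fun u hu hu2 => hpairs u (hu.trans hts.subset) hu2))

omit [LinearOrder V] in
lemma link_empty (K : Set (Finset V)) : link (∅ : Finset V) K = K := by
  ext τ; simp [link]

lemma sub_quot {M : Type*} [AddCommGroup M] [Module ℤ M] (h : Subsingleton M)
    (N : Submodule ℤ M) : Subsingleton (M ⧸ N) := by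
  constructor
  intro a b
  obtain ⟨x, rfl⟩ := Submodule.Quotient.mk_surjective N a
  obtain ⟨y, rfl⟩ := Submodule.Quotient.mk_surjective N b
  rw [Subsingleton.elim x y]

lemma not_subsingleton_of_sphere {L : Set (Finset V)} {n : ℕ}
    (hL : HasSphereHomology L n) (h : Subsingleton (RH L n)) : False := by
  obtain ⟨e⟩ := hL.1
  haveI := h
  have := e.toEquiv.symm.subsingleton
  exact absurd (Subsingleton.elim (0 : ℤ) 1) (by norm_num)

/-- If `K` has sphere homology in degree `n`, it has a face with `n` vertices. -/
lemma exists_face_card {K : Set (Finset V)} {n : ℕ} (hL : HasSphereHomology K n) :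
    ∃ s ∈ K, s.card = n := by
  by_contra h
  push_neg at h
  haveI : IsEmpty {s : Finset V // s ∈ K ∧ s.card = n} :=
    ⟨fun x => h x.1 x.2.1 x.2.2⟩
  haveI h1 : Subsingleton (Chains K n) := inferInstance
  haveI h2 : Subsingleton (cycles K n) := inferInstance
  exact not_subsingleton_of_sphere hL (sub_quot h2 _)

/-- A complex with `S⁰` homology has at least two vertices. -/
lemma two_vertices {L : Set (Finset V)} (hL : HasSphereHomology L 1) (h0 : ∅ ∈ L) :
    ∃ a b : V, {a} ∈ L ∧ {b} ∈ L ∧ a ≠ b := by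
  by_contra hcon
  push_neg at hcon
  have hsub : ∀ x y : {s : Finset V // s ∈ L ∧ s.card = 1}, x = y := by
    rintro ⟨s, hs, hc⟩ ⟨t, ht, htc⟩
    obtain ⟨a, rfl⟩ := Finset.card_eq_one.mp hc
    obtain ⟨b, rfl⟩ := Finset.card_eq_one.mp htc
    simp [hcon a b hs ht]
  have hker : ∀ f : Chains L 1, bd L 0 f = 0 → f = 0 := by
    intro f hf
    ext x
    have hfx : f = Finsupp.single x (f x) := by
      ext y
      rw [hsub y x]
      simp
    rw [hfx] at hf
    obtain ⟨s, hs, hc⟩ := x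
    obtain ⟨a, rfl⟩ := Finset.card_eq_one.mp hc
    rw [bd, Finsupp.lsum_single, LinearMap.toSpanSingleton_apply] at hf
    have hattach : ({a} : Finset V).attach = {⟨a, Finset.mem_singleton_self a⟩} := by
      ext y
      simp only [Finset.mem_attach, Finset.mem_singleton, true_iff]
      exact Subtype.ext (Finset.mem_singleton.mp y.2)
    rw [hattach, Finset.sum_singleton] at hf
    have h0' : ({a} : Finset V).erase a ∈ L := by
      rw [Finset.erase_singleton]; exact h0
    rw [dif_pos h0'] at hf
    have h2 := DFunLike.congr_fun hf ⟨({a} : Finset V).erase a, h0', by simp⟩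
    simpa using h2
  have hcyc : cycles L 1 = LinearMap.ker (bd L 0) := rfl
  haveI hss : Subsingleton (cycles L 1) := by
    constructor
    rintro ⟨a, ha⟩ ⟨b, hb⟩
    rw [hcyc] at ha hb
    have ha' := hker a (LinearMap.mem_ker.mp ha)
    have hb' := hker b (LinearMap.mem_ker.mp hb)
    exact Subtype.ext (ha'.trans hb'.symm)
  exact not_subsingleton_of_sphere hL (sub_quot hss _)

end Aux

/-- a flag homology `(d-1)`-sphere with `d ≥ 1` has at least `2d` vertices,
i.e. `γ₁ = f₀ - 2d ≥ 0`. -/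
theorem flag_homology_sphere_vertex_bound (K : Set (Finset V)) (d : ℕ)
    (hd : 1 ≤ d) (hfin : K.Finite) (hS : IsHomologySphere K d) (hF : IsFlag K) :
    2 * d ≤ fnum K 1 := by
  letI instDE : DecidableEq V := Classical.decEq V
  obtain ⟨hK, hdim, hlink⟩ := hS
  -- a facet of size d exists
  have hsphere : HasSphereHomology K d := by
    have := hlink ∅ hK.1
    rwa [link_empty, Finset.card_empty, Nat.sub_zero] at this
  obtain ⟨σ, hσK, hσd⟩ := exists_face_card hsphere
  -- for each v ∈ σ, choose a second vertex of the link of σ.erase v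
  have hchoice : ∀ v : V, ∃ u : V, v ∈ σ →
      u ≠ v ∧ u ∉ σ ∧ ({u} : Finset V) ∪ σ.erase v ∈ K := by
    intro v
    by_cases hv : v ∈ σ
    · have herase : σ.erase v ∈ K := hK.2 σ hσK _ (Finset.erase_subset v σ)
      have hcard : (σ.erase v).card = d - 1 := by
        rw [Finset.card_erase_of_mem hv, hσd]
      have hsph := hlink (σ.erase v) herase
      rw [hcard, (by omega : d - (d - 1) = 1)] at hsph
      obtain ⟨a, b, ha, hb, hab⟩ := two_vertices hsph
        ⟨by simp, by simpa using herase⟩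
      -- extract the needed properties, for whichever of a, b differs from v
      have key : ∀ u : V, ({u} : Finset V) ∈ link (σ.erase v) K → u ≠ v →
          u ≠ v ∧ u ∉ σ ∧ ({u} : Finset V) ∪ σ.erase v ∈ K := by
        intro u hu huv
        have hnot : u ∉ σ.erase v := by
          intro hmem
          have h1 := hu.1
          rw [Finset.singleton_inter_of_mem hmem] at h1
          exact absurd h1 (Finset.singleton_ne_empty u)
        refine ⟨huv, ?_, ?_⟩
        · intro hmem
          exact hnot (Finset.mem_erase.mpr ⟨huv, hmem⟩)
        · have h2 := hu.2
          convert h2 using 1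
      by_cases hav : a = v
      · have hbv : b ≠ v := fun h => hab (hav.trans h.symm)
        exact ⟨b, fun _ => key b hb hbv⟩
      · exact ⟨a, fun _ => key a ha hav⟩
    · exact ⟨v, fun h => absurd h hv⟩
  choose w hw using hchoice
  have hwne : ∀ v ∈ σ, w v ≠ v := fun v hv => (hw v hv).1
  have hwnotin : ∀ v ∈ σ, w v ∉ σ := fun v hv => (hw v hv).2.1
  have hwmem : ∀ v ∈ σ, ({w v} : Finset V) ∪ σ.erase v ∈ K :=
    fun v hv => (hw v hv).2.2
  have hedge : ∀ v ∈ σ, ∀ u ∈ σ, u ≠ v → ({u, w v} : Finset V) ∈ K := by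
    intro v hv u hu huv
    apply hK.2 _ (hwmem v hv)
    intro x hx
    rcases Finset.mem_insert.mp hx with rfl | hx
    · exact Finset.mem_union_right _ (Finset.mem_erase.mpr ⟨huv, hu⟩)
    · rw [Finset.mem_singleton] at hx
      subst hx
      exact Finset.mem_union_left _ (Finset.mem_singleton_self _)
  have hnonedge : ∀ v ∈ σ, ({v, w v} : Finset V) ∉ K := by
    intro v hv hvw
    have hclique : insert (w v) σ ∈ K := by
      apply flag_clique hF
      intro t hts ht2
      obtain ⟨a, b, hab, rfl⟩ := Finset.card_eq_two.mp ht2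
      have ha : a ∈ insert (w v) σ := hts (Finset.mem_insert_self a _)
      have hb : b ∈ insert (w v) σ := hts (by simp)
      rcases Finset.mem_insert.mp ha with rfl | ha
      · rcases Finset.mem_insert.mp hb with rfl | hb
        · exact absurd rfl hab
        · by_cases hbv : b = v
          · subst hbv
            rw [Finset.pair_comm]
            exact hvw
          · rw [Finset.pair_comm]
            exact hedge v hv b hb hbv
      · rcases Finset.mem_insert.mp hb with rfl | hb
        · by_cases hav : a = v
          · subst hav; exact hvw
          · exact hedge v hv a ha hav
        · refine hK.2 σ hσK _ ?_
          intro x hx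
          rcases Finset.mem_insert.mp hx with rfl | hx
          · exact ha
          · rw [Finset.mem_singleton] at hx; subst hx; exact hb
    have hcard := hdim _ hclique
    rw [Finset.card_insert_of_notMem (hwnotin v hv), hσd] at hcard
    omega
  have hinj : Set.InjOn w σ := by
    intro v hv v' hv' heq
    by_contra hne
    have h1 : ({v, w v'} : Finset V) ∈ K := hedge v' hv' v hv hne
    rw [← heq] at h1
    exact hnonedge v hv h1
  -- assemble 2d vertices
  set T : Finset V := σ ∪ σ.image w with hT
  have hdisj : Disjoint σ (σ.image w) := by
    rw [Finset.disjoint_right]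
    intro x hx
    obtain ⟨v, hv, rfl⟩ := Finset.mem_image.mp hx
    exact hwnotin v hv
  have hTcard : T.card = 2 * d := by
    rw [hT, Finset.card_union_of_disjoint hdisj,
      Finset.card_image_of_injOn hinj, hσd]
    omega
  have hTsing : ∀ u ∈ T, ({u} : Finset V) ∈ K := by
    intro u hu
    rcases Finset.mem_union.mp hu with hu | hu
    · exact hK.2 σ hσK _ (Finset.singleton_subset_iff.mpr hu)
    · obtain ⟨v, hv, rfl⟩ := Finset.mem_image.mp hu
      exact hK.2 _ (hwmem v hv) _ (Finset.subset_union_left)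
  have hsub : ↑(T.image (fun u => ({u} : Finset V))) ⊆ {s ∈ K | s.card = 1} := by
    intro s hs
    rw [Finset.coe_image] at hs
    obtain ⟨u, hu, rfl⟩ := hs
    exact ⟨hTsing u hu, Finset.card_singleton u⟩
  have hfinS : {s ∈ K | s.card = 1}.Finite := hfin.subset (fun s hs => hs.1)
  have hle : (T.image (fun u => ({u} : Finset V))).card ≤ fnum K 1 := by
    rw [fnum, ← Set.ncard_coe_finset]
    exact Set.ncard_le_ncard hsub hfinS
  rwa [Finset.card_image_of_injective _ Finset.singleton_injective, hTcard] at hle
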